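/- Let M be an oriented n-dimensional manifold and let ∇ and ∇̄ be projectively equivalent torsion-free affine connections on M. Then: (1) for every vector field v of projective weight 1 (section of T^{(1,0)}M ⊗ (Λ_n)^{1/(n+1)}M), the trace-free part of its covariant derivative, v^i_{,j} − (1/n) v^s_{,s} δ^i_j, is the same for ∇ and ∇̄; and (2) for every symmetric (2,0)-tensor σ of projective weight 2 (section of the symmetric part of T^{(2,0)}M ⊗ (Λ_n)^{2/(n+1)}M), the expression σ^{ij}_{,k} − (1/(n+1))(σ^{is}_{,s} δ^j_k + σ^{js}_{,s} δ^i_k) is the same for ∇ and ∇̄. -/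

import Mathlib

open scoped ContDiff

noncomputable section

namespace ProjGeo

/-- The partial derivative of a function on `ℝⁿ` in the `j`-th coordinate direction. -/
def pd {n : ℕ} (j : Fin n) (f : (Fin n → ℝ) → ℝ) (p : Fin n → ℝ) : ℝ :=
  fderiv ℝ f p (Pi.single j 1)

/-- Christoffel symbols in coordinates: `Γ p i j k` represents `Γ^i_{jk}` at the point `p`. -/
abbrev Christoffel (n : ℕ) := (Fin n → ℝ) → Fin n → Fin n → Fin n → ℝ

/-- A connection is torsion-free (symmetric) if `Γ^i_{jk} = Γ^i_{kj}`. -/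
def TorsionFree {n : ℕ} (Γ : Christoffel n) : Prop :=
  ∀ p i j k, Γ p i j k = Γ p i k j

/-- Smoothness of the Christoffel symbols on the open set `U`. -/
def SmoothChristoffelOn {n : ℕ} (U : Set (Fin n → ℝ)) (Γ : Christoffel n) : Prop :=
  ∀ i j k, ContDiffOn ℝ ∞ (fun p => Γ p i j k) U

/-- `γ` is a (parameterized) geodesic of the connection `Γ` on the parameter set `I`,
staying inside `U`: it is smooth and satisfies `γ̈^i + Γ^i_{jk} γ̇^j γ̇^k = 0`. -/
def IsGeodesicOn {n : ℕ} (U : Set (Fin n → ℝ)) (Γ : Christoffel n)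
    (γ : ℝ → Fin n → ℝ) (I : Set ℝ) : Prop :=
  (∀ t ∈ I, γ t ∈ U) ∧ (∀ i, ContDiffOn ℝ ∞ (fun t => γ t i) I) ∧
  ∀ t ∈ I, ∀ i,
    deriv (fun s => deriv (fun u => γ u i) s) t
      + ∑ j, ∑ k, Γ (γ t) i j k * deriv (fun u => γ u j) t * deriv (fun u => γ u k) t = 0

/-- `h` is a smooth regular reparameterisation defined on `J` and mapping `J` bijectively
onto `I`. -/
def IsReparam (I J : Set ℝ) (h : ℝ → ℝ) : Prop :=
  ContDiffOn ℝ ∞ h J ∧ (∀ t ∈ J, deriv h t ≠ 0) ∧ Set.BijOn h J I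

/-- Two connections are projectively equivalent on `U`: each geodesic of the one is, after a
suitable reparameterisation, a geodesic of the other, and vice versa. -/
def ProjEquivOn {n : ℕ} (U : Set (Fin n → ℝ)) (Γ Γ' : Christoffel n) : Prop :=
  (∀ γ I, IsOpen I → IsGeodesicOn U Γ γ I →
    ∃ h J, IsOpen J ∧ IsReparam I J h ∧ IsGeodesicOn U Γ' (fun t => γ (h t)) J) ∧
  (∀ γ I, IsOpen I → IsGeodesicOn U Γ' γ I →
    ∃ h J, IsOpen J ∧ IsReparam I J h ∧ IsGeodesicOn U Γ (fun t => γ (h t)) J)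

/-- `Γ'` is obtained from `Γ` by the projective change associated with the 1-form `φ`:
`Γ'^i_{jk} = Γ^i_{jk} + φ_k δ^i_j + φ_j δ^i_k` on `U`. -/
def ProjChange {n : ℕ} (Γ Γ' : Christoffel n) (φ : (Fin n → ℝ) → Fin n → ℝ)
    (U : Set (Fin n → ℝ)) : Prop :=
  ∀ p ∈ U, ∀ i j k, Γ' p i j k =
    Γ p i j k + (if i = j then φ p k else 0) + (if i = k then φ p j else 0)

end ProjGeo

namespace ProjGeo

/-- The covariant derivative `v^i_{,j}` of a `(1,0)`-tensor `v` of projective weight `w`: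
`v^i_{,j} = ∂_j v^i + Γ^i_{sj} v^s − (w/(n+1)) Γ^s_{sj} v^i`. -/
def covVec {n : ℕ} (w : ℝ) (Γ : Christoffel n) (v : (Fin n → ℝ) → Fin n → ℝ)
    (p : Fin n → ℝ) (i j : Fin n) : ℝ :=
  pd j (fun q => v q i) p + ∑ s, Γ p i s j * v p s
    - (w / ((n : ℝ) + 1)) * (∑ s, Γ p s s j) * v p i

/-- The covariant derivative `σ^{ij}_{,k}` of a `(2,0)`-tensor `σ` of projective weight `w`:
`σ^{ij}_{,k} = ∂_k σ^{ij} + Γ^i_{sk} σ^{sj} + Γ^j_{sk} σ^{is} − (w/(n+1)) Γ^s_{sk} σ^{ij}`. -/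
def covVec2 {n : ℕ} (w : ℝ) (Γ : Christoffel n) (σ : (Fin n → ℝ) → Fin n → Fin n → ℝ)
    (p : Fin n → ℝ) (i j k : Fin n) : ℝ :=
  pd k (fun q => σ q i j) p + ∑ s, Γ p i s k * σ p s j + ∑ s, Γ p j s k * σ p i s
    - (w / ((n : ℝ) + 1)) * (∑ s, Γ p s s k) * σ p i j

/-- The trace-free part of the covariant derivative of a weight-2 symmetric `(2,0)`-tensor:
`σ^{ij}_{,k} − (1/(n+1))(σ^{is}_{,s} δ^j_k + σ^{js}_{,s} δ^i_k)`; the metrisability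
operator. -/
def mOp {n : ℕ} (Γ : Christoffel n) (σ : (Fin n → ℝ) → Fin n → Fin n → ℝ)
    (p : Fin n → ℝ) (i j k : Fin n) : ℝ :=
  covVec2 2 Γ σ p i j k - (1 / ((n : ℝ) + 1)) *
    ((∑ s, covVec2 2 Γ σ p i s s) * (if j = k then 1 else 0)
      + (∑ s, covVec2 2 Γ σ p j s s) * (if i = k then 1 else 0))

end ProjGeo

namespace ProjGeo

lemma quad_eval {n : ℕ} (D : Fin n → Fin n → ℝ) (j k : Fin n) (α β : ℝ) :
    ∑ a, ∑ b, D a b * ((if a = j then α else 0) + (if a = k then β else 0))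
      * ((if b = j then α else 0) + (if b = k then β else 0))
    = α*α*D j j + α*β*D j k + β*α*D k j + β*β*D k k := by
  simp [mul_add, add_mul, Finset.sum_add_distrib, mul_ite, ite_mul, mul_zero, zero_mul,
    Finset.sum_ite_eq']
  ring

lemma proj_form {n : ℕ} (hn : 2 ≤ n) (D : Fin n → Fin n → Fin n → ℝ)
    (hsym : ∀ i j k, D i j k = D i k j)
    (h : ∀ ξ : Fin n → ℝ, ∃ lam : ℝ, ∀ i, (∑ j, ∑ k, D i j k * ξ j * ξ k) = lam * ξ i) :
    ∃ φ : Fin n → ℝ, ∀ i j k, D i j k =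
      (if i = j then φ k else 0) + (if i = k then φ j else 0) := by
  have hnt : Nontrivial (Fin n) := Fin.nontrivial_iff_two_le.mpr hn
  have key : ∀ (j k : Fin n) (α β : ℝ), ∃ lam : ℝ, ∀ i,
      α*α*D i j j + α*β*D i j k + β*α*D i k j + β*β*D i k k
        = lam * ((if i = j then α else 0) + (if i = k then β else 0)) := by
    intro j k α β
    obtain ⟨lam, hlam⟩ := h (fun a => (if a = j then α else 0) + (if a = k then β else 0))
    exact ⟨lam, fun i => by rw [← quad_eval (D i) j k α β]; exact hlam i⟩
  have F1 : ∀ i j, i ≠ j → D i j j = 0 := by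
    intro i j hij
    obtain ⟨lam, hlam⟩ := key j j 1 0
    have := hlam i
    simp [hij] at this
    linarith
  have F2 : ∀ i j k, i ≠ j → i ≠ k → D i j k = 0 := by
    intro i j k hij hik
    obtain ⟨L, hL⟩ := key j k 1 1
    have h1 := hL i
    simp [hij, hik] at h1
    have e1 := hsym i k j
    have e2 := F1 i j hij
    have e3 := F1 i k hik
    linarith
  have F3 : ∀ j k, j ≠ k → D j j k = D k k k / 2 := by
    intro j k hjk
    obtain ⟨L, hL⟩ := key j k 1 1
    obtain ⟨M, hM⟩ := key j k 1 (-1)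
    have h1 := hL j
    have h2 := hL k
    have h3 := hM j
    have h4 := hM k
    simp [hjk, Ne.symm hjk] at h1 h2 h3 h4
    have e1 := F1 j k hjk
    have e2 := F1 k j (Ne.symm hjk)
    have e3 := hsym j k j
    have e4 := hsym k k j
    linarith
  refine ⟨fun i => D i i i / 2, ?_⟩
  intro i j k
  by_cases hij : i = j
  · by_cases hik : i = k
    · subst hij; subst hik
      have : D i i i = D i i i / 2 + D i i i / 2 := by ring
      simpa using this
    · subst hij
      simp only [if_pos rfl, if_neg hik, add_zero]
      exact F3 i k hik
  · by_cases hik : i = k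
    · subst hik
      simp only [if_neg hij, if_pos rfl, zero_add]
      rw [hsym i j i]
      exact F3 i j hij
    · simp only [if_neg hij, if_neg hik, add_zero]
      exact F2 i j k hij hik

end ProjGeo
namespace ProjGeo

variable {n : ℕ} {Γ Γ' : Christoffel n} {p : Fin n → ℝ} {φ : Fin n → ℝ}

lemma covVec_change
    (hc : ∀ i j k, Γ' p i j k = Γ p i j k + (if i = j then φ k else 0) + (if i = k then φ j else 0))
    (v : (Fin n → ℝ) → Fin n → ℝ) (i j : Fin n) :
    covVec 1 Γ' v p i j = covVec 1 Γ v p i j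
      + (if i = j then (∑ s, φ s * v p s) else 0) := by
  have hnn : ((n:ℝ)+1) ≠ 0 := by positivity
  have hsum1 : ∑ s, Γ' p i s j * v p s = ∑ s, Γ p i s j * v p s + φ j * v p i
      + (if i = j then (∑ s, φ s * v p s) else 0) := by
    simp only [hc, add_mul, Finset.sum_add_distrib, ite_mul, zero_mul]
    simp [Finset.sum_ite_eq, Finset.sum_ite_irrel, Finset.sum_const_zero]
  have hsum2 : ∑ s, Γ' p s s j = ∑ s, Γ p s s j + ((n:ℝ)+1) * φ j := by
    simp only [hc]
    simp [Finset.sum_add_distrib, Finset.sum_ite_eq', Finset.sum_const, Finset.card_univ,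
      nsmul_eq_mul]
    ring
  unfold covVec
  rw [hsum1, hsum2]
  by_cases hij : i = j <;> simp [hij] <;> field_simp <;> ring

lemma covVec2_change
    (hc : ∀ i j k, Γ' p i j k = Γ p i j k + (if i = j then φ k else 0) + (if i = k then φ j else 0))
    (σ : (Fin n → ℝ) → Fin n → Fin n → ℝ) (hσ : ∀ i j, σ p i j = σ p j i) (i j k : Fin n) :
    covVec2 2 Γ' σ p i j k = covVec2 2 Γ σ p i j k
      + (if i = k then (∑ s, φ s * σ p s j) else 0)
      + (if j = k then (∑ s, φ s * σ p s i) else 0) := by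
  have hnn : ((n:ℝ)+1) ≠ 0 := by positivity
  have hsum1 : ∑ s, Γ' p i s k * σ p s j = ∑ s, Γ p i s k * σ p s j + φ k * σ p i j
      + (if i = k then (∑ s, φ s * σ p s j) else 0) := by
    simp only [hc, add_mul, Finset.sum_add_distrib, ite_mul, zero_mul]
    simp [Finset.sum_ite_eq, Finset.sum_ite_irrel, Finset.sum_const_zero]
  have hsum2 : ∑ s, Γ' p j s k * σ p i s = ∑ s, Γ p j s k * σ p i s + φ k * σ p i j
      + (if j = k then (∑ s, φ s * σ p s i) else 0) := by
    have base : ∑ s, Γ' p j s k * σ p i s = ∑ s, Γ p j s k * σ p i s + φ k * σ p i j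
        + (if j = k then (∑ s, φ s * σ p i s) else 0) := by
      simp only [hc, add_mul, Finset.sum_add_distrib, ite_mul, zero_mul]
      simp [Finset.sum_ite_eq, Finset.sum_ite_irrel, Finset.sum_const_zero]
    have e : (∑ s, φ s * σ p i s) = ∑ s, φ s * σ p s i :=
      Finset.sum_congr rfl fun s _ => by rw [hσ i s]
    rw [base, e]
  have hsum3 : ∑ s, Γ' p s s k = ∑ s, Γ p s s k + ((n:ℝ)+1) * φ k := by
    simp only [hc]
    simp [Finset.sum_add_distrib, Finset.sum_ite_eq', Finset.sum_const, Finset.card_univ,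
      nsmul_eq_mul]
    ring
  unfold covVec2
  rw [hsum1, hsum2, hsum3]
  by_cases hik : i = k <;> by_cases hjk : j = k <;>
    simp [hik, hjk] <;> field_simp <;> ring

end ProjGeo
namespace ProjGeo

lemma contDiffOn_of_ode {E : Type*} [NormedAddCommGroup E] [NormedSpace ℝ E]
    {v : E → E} {V : Set E} (hv : ContDiffOn ℝ ∞ v V)
    {f : ℝ → E} {I : Set ℝ} (hI : IsOpen I)
    (hf : ∀ t ∈ I, HasDerivAt f (v (f t)) t) (hmem : ∀ t ∈ I, f t ∈ V) :
    ContDiffOn ℝ ∞ f I := by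
  rw [contDiffOn_infty]
  intro m
  induction m with
  | zero =>
    rw [Nat.cast_zero, contDiffOn_zero]
    exact fun t ht => (hf t ht).differentiableAt.continuousAt.continuousWithinAt
  | succ m ih =>
    have hcast : ((m + 1 : ℕ) : WithTop ℕ∞) = (m : WithTop ℕ∞) + 1 := by norm_cast
    rw [hcast, contDiffOn_succ_iff_deriv_of_isOpen hI]
    refine ⟨fun t ht => (hf t ht).differentiableAt.differentiableWithinAt, ?_, ?_⟩
    · intro hcontra
      simp at hcontra
    · have hcomp : ContDiffOn ℝ m (fun t => v (f t)) I :=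
        (hv.of_le (by exact_mod_cast le_top)).comp ih hmem
      exact hcomp.congr fun t ht => (hf t ht).deriv

end ProjGeo
namespace ProjGeo

lemma exists_geodesic {n : ℕ} {U : Set (Fin n → ℝ)} (hU : IsOpen U) {Γ : Christoffel n}
    (hsm : SmoothChristoffelOn U Γ) {p : Fin n → ℝ} (hp : p ∈ U) (ξ : Fin n → ℝ) :
    ∃ (γ : ℝ → Fin n → ℝ) (ε : ℝ), 0 < ε ∧ γ 0 = p ∧
      (∀ i, deriv (fun s => γ s i) 0 = ξ i) ∧
      IsGeodesicOn U Γ γ (Set.Ioo (-ε) ε) := by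
  classical
  set F : ((Fin n → ℝ) × (Fin n → ℝ)) → ((Fin n → ℝ) × (Fin n → ℝ)) :=
    fun y => (y.2, fun i => -∑ j, ∑ k, Γ y.1 i j k * y.2 j * y.2 k) with hF
  set V : Set ((Fin n → ℝ) × (Fin n → ℝ)) := U ×ˢ Set.univ with hV
  have hVopen : IsOpen V := hU.prod isOpen_univ
  have hFsm : ContDiffOn ℝ ∞ F V := by
    apply ContDiffOn.prodMk
    · exact contDiff_snd.contDiffOn
    · rw [contDiffOn_pi]
      intro i
      apply ContDiffOn.neg
      apply ContDiffOn.sum; intro j _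
      apply ContDiffOn.sum; intro k _
      apply ContDiffOn.mul
      apply ContDiffOn.mul
      · exact (hsm i j k).comp contDiff_fst.contDiffOn (fun y hy => hy.1)
      · exact (((ContinuousLinearMap.proj j).comp
          (ContinuousLinearMap.snd ℝ (Fin n → ℝ) (Fin n → ℝ))).contDiff).contDiffOn
      · exact (((ContinuousLinearMap.proj k).comp
          (ContinuousLinearMap.snd ℝ (Fin n → ℝ) (Fin n → ℝ))).contDiff).contDiffOn
  have hpV : (p, ξ) ∈ V := ⟨hp, trivial⟩
  have hFat : ContDiffAt ℝ 1 F (p, ξ) :=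
    (hFsm.contDiffAt (hVopen.mem_nhds hpV)).of_le (by exact_mod_cast le_top)
  obtain ⟨f, hf0, ε₀, hε₀, hfode⟩ := hFat.exists_forall_mem_closedBall_exists_eq_forall_mem_Ioo_hasDerivAt₀ 0
  have h0mem : (0:ℝ) ∈ Set.Ioo (0 - ε₀) (0 + ε₀) := by constructor <;> linarith
  have hcont : ContinuousAt f 0 := (hfode 0 h0mem).continuousAt
  have hVnhds : V ∈ nhds (f 0) := by rw [hf0]; exact hVopen.mem_nhds hpV
  obtain ⟨ε₁, hε₁, hball⟩ := Metric.mem_nhds_iff.mp (hcont.preimage_mem_nhds hVnhds)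
  set ε : ℝ := min ε₀ ε₁ with hε
  have hεpos : 0 < ε := lt_min hε₀ hε₁
  set I : Set ℝ := Set.Ioo (-ε) ε with hI
  have hIopen : IsOpen I := isOpen_Ioo
  have hsub : ∀ t ∈ I, t ∈ Set.Ioo (0 - ε₀) (0 + ε₀) := by
    intro t ht
    obtain ⟨h1, h2⟩ := ht
    have := min_le_left ε₀ ε₁
    constructor <;> simp only [zero_sub, zero_add] <;> linarith
  have hmemV : ∀ t ∈ I, f t ∈ V := by
    intro t ht
    apply hball
    obtain ⟨h1, h2⟩ := ht
    have := min_le_right ε₀ ε₁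
    simp only [Metric.mem_ball, Real.dist_eq, sub_zero]
    rw [abs_lt]; constructor <;> linarith
  have hfode' : ∀ t ∈ I, HasDerivAt f (F (f t)) t := fun t ht => hfode t (hsub t ht)
  set γ : ℝ → Fin n → ℝ := fun t => (f t).1 with hγ
  set u : ℝ → Fin n → ℝ := fun t => (f t).2 with hu
  have hγd : ∀ t ∈ I, ∀ i, HasDerivAt (fun s => γ s i) (u t i) t := by
    intro t ht i
    exact (((ContinuousLinearMap.proj i).comp
      (ContinuousLinearMap.fst ℝ (Fin n → ℝ) (Fin n → ℝ))).hasFDerivAt).comp_hasDerivAt t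
      (hfode' t ht)
  have hud : ∀ t ∈ I, ∀ i, HasDerivAt (fun s => u s i)
      (-∑ j, ∑ k, Γ (γ t) i j k * u t j * u t k) t := by
    intro t ht i
    exact (((ContinuousLinearMap.proj i).comp
      (ContinuousLinearMap.snd ℝ (Fin n → ℝ) (Fin n → ℝ))).hasFDerivAt).comp_hasDerivAt t
      (hfode' t ht)
  have hderiv : ∀ t ∈ I, ∀ i, deriv (fun s => γ s i) t = u t i :=
    fun t ht i => (hγd t ht i).deriv
  have h0I : (0:ℝ) ∈ I := by constructor <;> simp [hεpos] <;> linarith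
  have hsmf : ContDiffOn ℝ ∞ f I := contDiffOn_of_ode hFsm hIopen hfode' hmemV
  refine ⟨γ, ε, hεpos, ?_, ?_, ?_, ?_, ?_⟩
  · show (f 0).1 = p
    rw [hf0]
  · intro i
    rw [hderiv 0 h0I i]
    show (f 0).2 i = ξ i
    rw [hf0]
  · exact fun t ht => (hmemV t ht).1
  · intro i
    exact (((ContinuousLinearMap.proj i).comp
      (ContinuousLinearMap.fst ℝ (Fin n → ℝ) (Fin n → ℝ))).contDiff).comp_contDiffOn hsmf
  · intro t ht i
    have e1 : deriv (fun s => deriv (fun w => γ w i) s) t = deriv (fun s => u s i) t := by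
      apply Filter.EventuallyEq.deriv_eq
      exact Filter.eventuallyEq_of_mem (hIopen.mem_nhds ht) (fun s hs => hderiv s hs i)
    rw [e1, (hud t ht i).deriv]
    have e2 : ∀ j, deriv (fun w => γ w j) t = u t j := hderiv t ht
    simp only [e2]
    ring

end ProjGeo
namespace ProjGeo

lemma key_prop {n : ℕ} {U : Set (Fin n → ℝ)} (hU : IsOpen U) {Γ Γ' : Christoffel n}
    (hsm : SmoothChristoffelOn U Γ) (hproj : ProjEquivOn U Γ Γ')
    {p : Fin n → ℝ} (hp : p ∈ U) (ξ : Fin n → ℝ) :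
    ∃ lam : ℝ, ∀ i, ∑ j, ∑ k, (Γ' p i j k - Γ p i j k) * ξ j * ξ k = lam * ξ i := by
  classical
  obtain ⟨γ, ε, hεpos, hγ0, hγ'0, hgeo⟩ := exists_geodesic hU hsm hp ξ
  set I : Set ℝ := Set.Ioo (-ε) ε with hIdef
  have hIopen : IsOpen I := isOpen_Ioo
  have h0I : (0:ℝ) ∈ I := ⟨by linarith, hεpos⟩
  obtain ⟨h, J, hJopen, ⟨hhsm, hh'ne, hbij⟩, hgeo'⟩ := hproj.1 γ I hIopen hgeo
  obtain ⟨t0, ht0J, ht0⟩ := hbij.surjOn h0I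
  obtain ⟨hmem, hγsm, hgeoeq⟩ := hgeo
  have hone : (1 : WithTop ℕ∞) ≤ ∞ := by exact_mod_cast le_top
  -- differentiability facts
  have hhdiff : ∀ t ∈ J, HasDerivAt h (deriv h t) t := fun t ht =>
    (((hhsm.contDiffAt (hJopen.mem_nhds ht)).of_le hone).differentiableAt one_ne_zero).hasDerivAt
  have hh'sm : ContDiffOn ℝ ∞ (deriv h) J :=
    ((contDiffOn_infty_iff_deriv_of_isOpen hJopen).mp hhsm).2
  have hh'diff : HasDerivAt (deriv h) (deriv (deriv h) t0) t0 :=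
    (((hh'sm.contDiffAt (hJopen.mem_nhds ht0J)).of_le hone).differentiableAt one_ne_zero).hasDerivAt
  have hγdiff : ∀ i, ∀ s ∈ I, HasDerivAt (fun w => γ w i) (deriv (fun w => γ w i) s) s :=
    fun i s hs =>
      ((((hγsm i).contDiffAt (hIopen.mem_nhds hs)).of_le hone).differentiableAt one_ne_zero).hasDerivAt
  have hγ'sm : ∀ i, ContDiffOn ℝ ∞ (deriv (fun w => γ w i)) I := fun i =>
    ((contDiffOn_infty_iff_deriv_of_isOpen hIopen).mp (hγsm i)).2
  have hγ'diff : ∀ i, ∀ s ∈ I, HasDerivAt (deriv (fun w => γ w i))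
      (deriv (deriv (fun w => γ w i)) s) s := fun i s hs =>
    ((((hγ'sm i).contDiffAt (hIopen.mem_nhds hs)).of_le hone).differentiableAt one_ne_zero).hasDerivAt
  have hmapsJ : ∀ t ∈ J, h t ∈ I := fun t ht => hbij.mapsTo ht
  -- Step A : first derivative of composed curve on J
  have stepA : ∀ i, ∀ t ∈ J, deriv (fun s => γ (h s) i) t
      = deriv (fun w => γ w i) (h t) * deriv h t := by
    intro i t ht
    exact ((hγdiff i (h t) (hmapsJ t ht)).comp t (hhdiff t ht)).deriv
  -- Step B : second derivative of composed curve at t0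
  set c : ℝ := deriv h t0 with hc
  have hcne : c ≠ 0 := hh'ne t0 ht0J
  set b : ℝ := deriv (deriv h) t0 with hb
  set A : Fin n → ℝ := fun i => ∑ j, ∑ k, Γ p i j k * ξ j * ξ k with hA
  set B : Fin n → ℝ := fun i => ∑ j, ∑ k, Γ' p i j k * ξ j * ξ k with hB
  -- deriv of γ-components at 0
  have hd0 : ∀ i, deriv (fun w => γ w i) 0 = ξ i := hγ'0
  have hdd0 : ∀ i, deriv (deriv (fun w => γ w i)) 0 = -A i := by
    intro i
    have := hgeoeq 0 h0I i
    rw [hγ0] at this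
    simp only [hd0] at this
    have e : deriv (fun s => deriv (fun w => γ w i) s) 0
        = deriv (deriv (fun w => γ w i)) 0 := rfl
    rw [e] at this
    simp only [hA]
    linarith
  have stepB : ∀ i, deriv (fun s => deriv (fun w => γ (h w) i) s) t0
      = (-A i) * c * c + ξ i * b := by
    intro i
    have ev : (fun s => deriv (fun w => γ (h w) i) s)
        =ᶠ[nhds t0] (fun s => deriv (fun w => γ w i) (h s) * deriv h s) :=
      Filter.eventuallyEq_of_mem (hJopen.mem_nhds ht0J) (fun s hs => stepA i s hs)
    rw [ev.deriv_eq]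
    have h1 : HasDerivAt (fun s => deriv (fun w => γ w i) (h s))
        (deriv (deriv (fun w => γ w i)) (h t0) * deriv h t0) t0 :=
      (hγ'diff i (h t0) (hmapsJ t0 ht0J)).comp t0 (hhdiff t0 ht0J)
    have h2 : HasDerivAt (fun s => deriv (fun w => γ w i) (h s) * deriv h s)
        (deriv (deriv (fun w => γ w i)) (h t0) * deriv h t0 * deriv h t0
          + deriv (fun w => γ w i) (h t0) * deriv (deriv h) t0) t0 := h1.mul hh'diff
    rw [h2.deriv, ht0, hdd0 i, hd0 i]
  -- Step C : geodesic equation of Γ' for the reparametrised curve at t0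
  have hgeoeq' := hgeo'.2.2 t0 ht0J
  have main : ∀ i, (-A i) * c * c + ξ i * b + (B i) * (c * c) = 0 := by
    intro i
    have := hgeoeq' i
    simp only [] at this
    rw [stepB i] at this
    have e2 : ∀ j, deriv (fun u => γ (h u) j) t0 = ξ j * c := by
      intro j
      rw [stepA j t0 ht0J, ht0, hd0 j]
    simp only [e2] at this
    rw [ht0, hγ0] at this
    have e3 : ∑ j, ∑ k, Γ' p i j k * (ξ j * c) * (ξ k * c) = B i * (c * c) := by
      rw [hB]
      simp only [Finset.sum_mul]
      apply Finset.sum_congr rfl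
      intro j _
      apply Finset.sum_congr rfl
      intro k _
      ring
    rw [e3] at this
    exact this
  refine ⟨-b / (c * c), ?_⟩
  intro i
  have e4 : ∑ j, ∑ k, (Γ' p i j k - Γ p i j k) * ξ j * ξ k = B i - A i := by
    rw [hA, hB, ← Finset.sum_sub_distrib]
    apply Finset.sum_congr rfl
    intro j _
    rw [← Finset.sum_sub_distrib]
    apply Finset.sum_congr rfl
    intro k _
    ring
  rw [e4]
  have := main i
  have hc2 : c * c ≠ 0 := mul_ne_zero hcne hcne
  field_simp
  linarith
end ProjGeo
namespace ProjGeo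

/-- (1) For `(1,0)`-tensors `v` of projective weight 1 the trace-free part
of the covariant derivative, `v^i_{,j} − (1/n) v^s_{,s} δ^i_j`, is projectively invariant;
(2) for symmetric `(2,0)`-tensors `σ` of projective weight 2 the expression
`σ^{ij}_{,k} − (1/(n+1))(σ^{is}_{,s} δ^j_k + σ^{js}_{,s} δ^i_k)` is projectively invariant. -/
theorem statement_6 {n : ℕ} (hn : 2 ≤ n) (U : Set (Fin n → ℝ)) (hU : IsOpen U)
    (Γ Γ' : Christoffel n) (hTF : TorsionFree Γ) (hTF' : TorsionFree Γ')
    (hsm : SmoothChristoffelOn U Γ) (hsm' : SmoothChristoffelOn U Γ')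
    (hproj : ProjEquivOn U Γ Γ') :
    (∀ v : (Fin n → ℝ) → Fin n → ℝ, (∀ i, ContDiffOn ℝ ∞ (fun p => v p i) U) →
      ∀ p ∈ U, ∀ i j,
        covVec 1 Γ' v p i j - (1 / (n : ℝ)) * (∑ s, covVec 1 Γ' v p s s)
            * (if i = j then 1 else 0)
          = covVec 1 Γ v p i j - (1 / (n : ℝ)) * (∑ s, covVec 1 Γ v p s s)
            * (if i = j then 1 else 0)) ∧
    (∀ σ : (Fin n → ℝ) → Fin n → Fin n → ℝ,
      (∀ i j, ContDiffOn ℝ ∞ (fun p => σ p i j) U) →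
      (∀ p i j, σ p i j = σ p j i) →
      ∀ p ∈ U, ∀ i j k, mOp Γ' σ p i j k = mOp Γ σ p i j k) := by
  have hn0 : (n:ℝ) ≠ 0 := Nat.cast_ne_zero.mpr (by omega)
  have hnn : ((n:ℝ)+1) ≠ 0 := by positivity
  -- at each point of U, the difference of the connections has projective form
  have hchange : ∀ p ∈ U, ∃ φ : Fin n → ℝ, ∀ i j k,
      Γ' p i j k = Γ p i j k + (if i = j then φ k else 0) + (if i = k then φ j else 0) := by
    intro p hp
    obtain ⟨φ, hφ⟩ := proj_form hn (fun i j k => Γ' p i j k - Γ p i j k)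
      (fun i j k => by
        show Γ' p i j k - Γ p i j k = Γ' p i k j - Γ p i k j
        rw [hTF p i j k, hTF' p i j k])
      (key_prop hU hsm hproj hp)
    exact ⟨φ, fun i j k => by have : Γ' p i j k - Γ p i j k = _ := hφ i j k; linarith⟩
  constructor
  · intro v hv p hp i j
    obtain ⟨φ, hc⟩ := hchange p hp
    have tr : ∑ s, covVec 1 Γ' v p s s
        = ∑ s, covVec 1 Γ v p s s + (n:ℝ) * (∑ s, φ s * v p s) := by
      simp only [covVec_change hc v]
      rw [Finset.sum_add_distrib]
      simp [Finset.sum_const, Finset.card_univ, nsmul_eq_mul]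
    rw [covVec_change hc v i j, tr]
    by_cases hij : i = j <;> simp [hij] <;> field_simp <;> ring
  · intro σ hσsm hσsym p hp i j k
    obtain ⟨φ, hc⟩ := hchange p hp
    have hσp : ∀ a b, σ p a b = σ p b a := fun a b => hσsym p a b
    have tr2 : ∀ a, ∑ s, covVec2 2 Γ' σ p a s s
        = ∑ s, covVec2 2 Γ σ p a s s + ((n:ℝ)+1) * (∑ s, φ s * σ p s a) := by
      intro a
      simp only [covVec2_change hc σ hσp]
      rw [Finset.sum_add_distrib, Finset.sum_add_distrib]
      simp [Finset.sum_ite_eq, Finset.sum_const, Finset.card_univ, nsmul_eq_mul]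
      ring
    unfold mOp
    rw [covVec2_change hc σ hσp i j k, tr2 i, tr2 j]
    by_cases hik : i = k <;> by_cases hjk : j = k <;>
      simp [hik, hjk] <;> field_simp <;> ring


end ProjGeo
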